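/- Let p be an odd prime, let s' ≥ 1 be an integer and set s = 2s'. Let X₁, X₂, X₃, X₄ be integers with p^{s'} | X₃ and p^{s'} | X₄. For an integer α coprime to p, write ᾱ for a multiplicative inverse of α modulo p^{s}. Then Σ_{α} e( ( X₁ ᾱ + X₂ (α+1)̄ + X₃ ᾱ² + X₄ ((α+1)̄)² ) / p^{s} ), where α runs over a complete set of residues modulo p^{s} with p ∤ α and p ∤ (α+1), equals p^{s'} · Σ_{α₁} e( ( X₁ ᾱ₁ + X₂ (α₁+1)̄ + X₃ ᾱ₁² + X₄ ((α₁+1)̄)² ) / p^{s} ), where α₁ runs over the integers 0 ≤ α₁ < p^{s'} with p ∤ α₁, p ∤ (α₁+1) and X₁ ᾱ₁² + X₂ ((α₁+1)̄)² ≡ 0 (mod p^{s'}). -/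

import Mathlib

/-- The standard additive character `e(x) = exp(2πix)`. -/
noncomputable def e (x : ℝ) : ℂ := Complex.exp (2 * (Real.pi : ℂ) * Complex.I * (x : ℂ))

lemma e_add (x y : ℝ) : e (x + y) = e x * e y := by
  simp only [e, ← Complex.exp_add]
  congr 1
  push_cast
  ring

lemma e_int (n : ℤ) : e n = 1 := by
  simp only [e]
  rw [Complex.exp_eq_one_iff]
  exact ⟨n, by push_cast; ring⟩

lemma e_pow (x : ℝ) (k : ℕ) : e x ^ k = e (k * x) := by
  simp only [e, ← Complex.exp_nat_mul]
  congr 1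
  push_cast
  ring

lemma e_eq_one_iff (D : ℤ) (N : ℕ) (hN : 0 < N) : e ((D : ℝ) / N) = 1 ↔ (N : ℤ) ∣ D := by
  have hNC : (N : ℂ) ≠ 0 := Nat.cast_ne_zero.mpr hN.ne'
  have hcast : (((D : ℝ) / N : ℝ) : ℂ) = (D : ℂ) / (N : ℂ) := by push_cast; ring
  simp only [e, hcast]
  rw [Complex.exp_eq_one_iff]
  have h2 : (2 * (Real.pi : ℂ) * Complex.I) ≠ 0 := by
    simp [Real.pi_ne_zero, Complex.I_ne_zero]
  constructor
  · rintro ⟨n, hn⟩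
    have h4 : (D : ℂ) / N = (n : ℂ) := mul_left_cancel₀ h2 (hn.trans (mul_comm _ _))
    rw [div_eq_iff hNC] at h4
    refine ⟨n, ?_⟩
    have : (D : ℂ) = (((N : ℤ) * n : ℤ) : ℂ) := by push_cast; rw [h4]; ring
    exact_mod_cast this
  · rintro ⟨k, hk⟩
    refine ⟨k, ?_⟩
    have h4 : (D : ℂ) / N = (k : ℂ) := by
      rw [show (D : ℂ) = (N : ℂ) * k by exact_mod_cast hk]
      field_simp
    rw [h4]; ring

lemma e_mod (a b : ℤ) (N : ℕ) (hN : 0 < N) (h : a ≡ b [ZMOD (N:ℤ)]) :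
    e ((a:ℝ)/N) = e ((b:ℝ)/N) := by
  obtain ⟨k, hk⟩ := h.dvd
  have hN' : (N : ℝ) ≠ 0 := by positivity
  have hb : (b : ℝ)/N = (a:ℝ)/N + ((k:ℤ):ℝ) := by
    have h1 : (b : ℝ) = a + N * k := by exact_mod_cast (by linarith [hk] : b = a + (N:ℤ) * k)
    rw [h1]; field_simp
  rw [hb, e_add, e_int, mul_one]

lemma geom (z : ℂ) (N : ℕ) (hz : z ^ N = 1) :
    ∑ j ∈ Finset.range N, z ^ j = if z = 1 then (N : ℂ) else 0 := by
  split_ifs with h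
  · simp [h]
  · rw [geom_sum_eq h, hz]
    simp

/-- **p-adic stationary phase identity** (Section 5 of the paper, obtained by splitting
`α = α₁ + α₂ p^{s'}` with `s = 2s'` and summing over `α₂`): if `p^{s'} ∣ X₃, X₄` then
`∑_{α mod p^s, p∤α, p∤α+1} e((X₁ᾱ + X₂(α+1)̄ + X₃ᾱ² + X₄((α+1)̄)²)/p^s)
 = p^{s'} ∑_{α₁ mod p^{s'}, p∤α₁, p∤α₁+1, X₁ᾱ₁² + X₂((α₁+1)̄)² ≡ 0 mod p^{s'}}
     e((X₁ᾱ₁ + X₂(α₁+1)̄ + X₃ᾱ₁² + X₄((α₁+1)̄)²)/p^s)`,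
where `ū = inv u` is any choice of multiplicative inverse modulo `p^s`. -/
theorem stmt_10 (p : ℕ) (hp : p.Prime) (hodd : Odd p)
    (s' : ℕ) (hs' : 1 ≤ s') (s : ℕ) (hs : s = 2 * s')
    (X₁ X₂ X₃ X₄ : ℤ) (hX₃ : (p : ℤ) ^ s' ∣ X₃) (hX₄ : (p : ℤ) ^ s' ∣ X₄)
    (inv : ℤ → ℤ)
    (hinv : ∀ a : ℤ, ¬ (p : ℤ) ∣ a → a * inv a ≡ 1 [ZMOD ((p : ℤ) ^ s)]) :
    (∑ α ∈ (Finset.range (p ^ s)).filter (fun α => ¬ p ∣ α ∧ ¬ p ∣ (α + 1)),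
        e (((X₁ * inv (α : ℤ) + X₂ * inv ((α : ℤ) + 1)
              + X₃ * (inv (α : ℤ)) ^ 2 + X₄ * (inv ((α : ℤ) + 1)) ^ 2 : ℤ) : ℝ)
            / (p : ℝ) ^ s))
      = ((p : ℂ)) ^ s' *
        ∑ α₁ ∈ (Finset.range (p ^ s')).filter
            (fun α₁ => ¬ p ∣ α₁ ∧ ¬ p ∣ (α₁ + 1) ∧
              X₁ * (inv (α₁ : ℤ)) ^ 2 + X₂ * (inv ((α₁ : ℤ) + 1)) ^ 2
                ≡ 0 [ZMOD ((p : ℤ) ^ s')]),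
          e (((X₁ * inv (α₁ : ℤ) + X₂ * inv ((α₁ : ℤ) + 1)
                + X₃ * (inv (α₁ : ℤ)) ^ 2 + X₄ * (inv ((α₁ : ℤ) + 1)) ^ 2 : ℤ) : ℝ)
              / (p : ℝ) ^ s) := by
  classical
  set N := p ^ s' with hNdef
  have hNpos : 0 < N := pow_pos hp.pos s'
  have hps : p ^ s = N * N := by rw [hs, two_mul, pow_add]
  have hpdvdN : p ∣ N := dvd_pow_self p (by omega : s' ≠ 0)
  have hNZ : ((N : ℕ) : ℤ) = (p : ℤ) ^ s' := by rw [hNdef]; push_cast; ring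
  have hmodZ : (p : ℤ) ^ s = ((N * N : ℕ) : ℤ) := by rw [← hps]; push_cast; ring
  have hpsR : (p : ℝ) ^ s = ((N * N : ℕ) : ℝ) := by rw [← hps]; push_cast; ring
  -- notation
  set f : ℤ → ℤ := fun a => X₁ * inv a + X₂ * inv (a + 1)
      + X₃ * inv a ^ 2 + X₄ * inv (a + 1) ^ 2 with hfdef
  set D : ℤ → ℤ := fun a => X₁ * inv a ^ 2 + X₂ * inv (a + 1) ^ 2 with hDdef
  have hfa : ∀ a : ℤ, X₁ * inv a + X₂ * inv (a + 1)
      + X₃ * inv a ^ 2 + X₄ * inv (a + 1) ^ 2 = f a := fun a => rfl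
  have hDa : ∀ a : ℤ, X₁ * inv a ^ 2 + X₂ * inv (a + 1) ^ 2 = D a := fun a => rfl
  -- the key congruence
  have key : ∀ a c : ℤ, ¬ (p : ℤ) ∣ a → ¬ (p : ℤ) ∣ (a + 1) →
      f (a + c * N) ≡ f a - c * N * D a [ZMOD ((N * N : ℕ) : ℤ)] := by
    intro a c ha ha1
    have hpN : (p : ℤ) ∣ (N : ℤ) := by exact_mod_cast Int.natCast_dvd_natCast.mpr hpdvdN
    have hpcN : (p : ℤ) ∣ c * (N : ℤ) := hpN.mul_left c
    have hpa : ¬ (p : ℤ) ∣ (a + c * N) := by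
      rw [add_comm, dvd_add_right hpcN]; exact ha
    have hpa1 : ¬ (p : ℤ) ∣ (a + c * N + 1) := by
      rw [show a + c * (N:ℤ) + 1 = (a + 1) + c * N by ring, add_comm, dvd_add_right hpcN]
      exact ha1
    rw [← ZMod.intCast_eq_intCast_iff]
    -- work in R := ZMod (N*N)
    have h1 := (ZMod.intCast_eq_intCast_iff _ _ (N * N)).mpr
      ((hmodZ ▸ hinv (a + c * N) hpa))
    have h1' := (ZMod.intCast_eq_intCast_iff _ _ (N * N)).mpr
      ((hmodZ ▸ hinv (a + c * N + 1) hpa1))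
    have h2 := (ZMod.intCast_eq_intCast_iff _ _ (N * N)).mpr
      ((hmodZ ▸ hinv a ha))
    have h2' := (ZMod.intCast_eq_intCast_iff _ _ (N * N)).mpr
      ((hmodZ ▸ hinv (a + 1) ha1))
    push_cast at h1 h1' h2 h2' ⊢
    have hn : ((N : ℕ) : ZMod (N * N)) ^ 2 = 0 := by
      have : ((N : ℕ) : ZMod (N * N)) ^ 2 = ((N * N : ℕ) : ZMod (N * N)) := by
        push_cast; ring
      rw [this, ZMod.natCast_self]
    obtain ⟨k3, hk3⟩ := hX₃
    obtain ⟨k4, hk4⟩ := hX₄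
    have hX3 : ((X₃ : ℤ) : ZMod (N * N)) = ((N : ℕ) : ZMod (N * N)) * ((k3 : ℤ) : ZMod (N * N)) := by
      rw [hk3, ← hNZ]; push_cast; ring
    have hX4 : ((X₄ : ℤ) : ZMod (N * N)) = ((N : ℕ) : ZMod (N * N)) * ((k4 : ℤ) : ZMod (N * N)) := by
      rw [hk4, ← hNZ]; push_cast; ring
    -- abbreviations
    set R := ZMod (N * N)
    set n : R := ((N : ℕ) : R) with hnn
    set A : R := ((inv a : ℤ) : R) with hA
    set B : R := ((inv (a + 1) : ℤ) : R) with hB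
    set A' : R := ((inv (a + c * N) : ℤ) : R) with hA'
    set B' : R := ((inv (a + c * N + 1) : ℤ) : R) with hB'
    -- h1 : ((a:R) + (c:R) * n) * A' = 1, etc. (after push_cast)
    have keyA : A' = A - A ^ 2 * (c : R) * n := by
      have kk : ((a : ℤ) : R) * A = 1 := h2
      have kk1 : (((a : ℤ) : R) + ((c : ℤ) : R) * n) * A' = 1 := by
        convert h1 using 2
      have key1 : (((a : ℤ) : R) + ((c : ℤ) : R) * n) * (A - A ^ 2 * (c : R) * n) = 1 := by
        linear_combination (1 - A * (c : R) * n) * kk - A ^ 2 * (c : R) ^ 2 * hn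
      linear_combination (A - A ^ 2 * (c:R) * n) * kk1 - A' * key1
    have keyB : B' = B - B ^ 2 * (c : R) * n := by
      have kk : (((a : ℤ) : R) + 1) * B = 1 := h2'
      have kk1 : (((a : ℤ) : R) + 1 + ((c : ℤ) : R) * n) * B' = 1 := by
        convert h1' using 2
        ring
      have key1 : (((a : ℤ) : R) + 1 + ((c : ℤ) : R) * n) * (B - B ^ 2 * (c : R) * n) = 1 := by
        linear_combination (1 - B * (c : R) * n) * kk - B ^ 2 * (c : R) ^ 2 * hn
      linear_combination (B - B ^ 2 * (c:R) * n) * kk1 - B' * key1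
    -- now the main identity
    simp only [hfdef, hDdef]
    push_cast
    rw [show a + c * ((N:ℕ) : ℤ) + 1 = (a + 1) + c * N by ring] at *
    rw [← hA, ← hB, ← hA', ← hB', hX3, hX4, keyA, keyB]
    linear_combination ((k3 : R) * ((A:R) ^ 4 * (c:R) ^ 2 * n - 2 * A ^ 3 * (c:R))
      + (k4 : R) * (B ^ 4 * (c:R) ^ 2 * n - 2 * B ^ 3 * (c:R))) * hn
  -- reindexing
  have reindex : ∀ G : ℕ → ℂ, ∑ α ∈ Finset.range (N * N), G α
      = ∑ a ∈ Finset.range N, ∑ c ∈ Finset.range N, G (a + c * N) := by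
    intro G
    rw [← Finset.sum_product']
    refine Finset.sum_nbij' (fun α => (α % N, α / N)) (fun x => x.1 + x.2 * N) ?_ ?_ ?_ ?_ ?_
    · intro α hα
      simp only [Finset.mem_product, Finset.mem_range] at *
      exact ⟨Nat.mod_lt _ hNpos, (Nat.div_lt_iff_lt_mul hNpos).mpr hα⟩
    · intro x hx
      simp only [Finset.mem_product, Finset.mem_range] at *
      calc x.1 + x.2 * N < N + x.2 * N := by omega
        _ = (x.2 + 1) * N := by ring
        _ ≤ N * N := Nat.mul_le_mul_right _ (by omega)
    · intro α hα
      simp [Nat.mod_add_div']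
    · intro x hx
      simp only [Finset.mem_product, Finset.mem_range] at hx
      have h1 : (x.1 + x.2 * N) % N = x.1 := by
        rw [Nat.add_mul_mod_self_right]; exact Nat.mod_eq_of_lt hx.1
      have h2 : (x.1 + x.2 * N) / N = x.2 := by
        rw [Nat.add_mul_div_right _ _ hNpos, Nat.div_eq_of_lt hx.1, zero_add]
      exact Prod.ext h1 h2
    · intro α hα
      exact congrArg G (Nat.mod_add_div' α N).symm
  -- rewrite both sides
  simp only [hfa, hDa, hpsR, Finset.sum_filter]
  rw [hps, reindex]
  have hNC : ((p : ℂ)) ^ s' = (N : ℂ) := by rw [hNdef]; push_cast; ring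
  rw [hNC, Finset.mul_sum]
  refine Finset.sum_congr rfl ?_
  intro a ha
  have hcond : ∀ c : ℕ, ((¬ p ∣ (a + c * N)) ∧ ¬ p ∣ (a + c * N + 1))
      ↔ ((¬ p ∣ a) ∧ ¬ p ∣ (a + 1)) := by
    intro c
    have hd : p ∣ c * N := Dvd.dvd.mul_left hpdvdN c
    rw [show a + c * N + 1 = c * N + (a + 1) by ring, show a + c * N = c * N + a by ring,
      Nat.dvd_add_right hd, Nat.dvd_add_right hd]
  by_cases hca : (¬ p ∣ a) ∧ ¬ p ∣ (a + 1)
  · obtain ⟨hA, hB⟩ := hca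
    have haz : ¬ (p : ℤ) ∣ (a : ℤ) := by exact_mod_cast hA
    have hbz : ¬ (p : ℤ) ∣ ((a : ℤ) + 1) := by
      rw [show ((a : ℤ) + 1) = ((a + 1 : ℕ) : ℤ) by push_cast; ring]
      exact_mod_cast hB
    have hNR : (N : ℝ) ≠ 0 := by positivity
    set z : ℂ := e (((-(D (a : ℤ)) : ℤ) : ℝ) / (N : ℝ)) with hz
    have hterm : ∀ c ∈ Finset.range N,
        (if (¬ p ∣ (a + c * N)) ∧ ¬ p ∣ (a + c * N + 1)
          then e (((f ((a + c * N : ℕ) : ℤ) : ℤ) : ℝ) / ((N * N : ℕ) : ℝ)) else 0)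
        = e (((f (a : ℤ) : ℤ) : ℝ) / ((N * N : ℕ) : ℝ)) * z ^ c := by
      intro c _
      rw [if_pos ((hcond c).mpr ⟨hA, hB⟩)]
      have hcast : ((a + c * N : ℕ) : ℤ) = (a : ℤ) + (c : ℤ) * (N : ℤ) := by push_cast; ring
      rw [hcast]
      have hk := key (a : ℤ) (c : ℤ) haz hbz
      rw [e_mod _ _ _ (Nat.mul_pos hNpos hNpos) hk]
      have hsplit : ((f (a:ℤ) - (c:ℤ) * (N:ℤ) * D (a:ℤ) : ℤ) : ℝ) / ((N * N : ℕ) : ℝ)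
          = ((f (a:ℤ) : ℤ) : ℝ) / ((N * N : ℕ) : ℝ)
            + (c : ℝ) * (((-(D (a:ℤ)) : ℤ) : ℝ) / (N : ℝ)) := by
        push_cast
        field_simp
        ring
      rw [hsplit, e_add, hz, ← e_pow]
    rw [Finset.sum_congr rfl hterm, ← Finset.mul_sum]
    have hzN : z ^ N = 1 := by
      rw [hz, e_pow, show (N : ℝ) * (((-(D (a:ℤ)) : ℤ) : ℝ) / (N : ℝ)) = ((-(D (a:ℤ)) : ℤ) : ℝ) by
        field_simp]
      exact e_int _
    rw [geom z N hzN]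
    have hiff : (z = 1) ↔ (D (a : ℤ) ≡ 0 [ZMOD ((p : ℤ) ^ s')]) := by
      rw [hz, e_eq_one_iff _ _ hNpos, dvd_neg, ← hNZ, ← Int.modEq_zero_iff_dvd]
    by_cases hDc : D (a : ℤ) ≡ 0 [ZMOD ((p : ℤ) ^ s')]
    · rw [if_pos (hiff.mpr hDc), if_pos ⟨hA, hB, hDc⟩]
      ring
    · rw [if_neg (fun h => hDc (hiff.mp h)), if_neg (fun h => hDc h.2.2)]
      ring
  · rw [Finset.sum_eq_zero (fun c _ => if_neg (fun h => hca ((hcond c).mp h))),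
      if_neg (fun h => hca ⟨h.1, h.2.1⟩), mul_zero]
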